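/- Let S be a finite family of quasi-convex sets between two horizontal lines, modeled abstractly as follows: each element v has a base segment given by two real numbers v¹ and v² (its x-coordinates on the bottom and top lines). Two base segments s_u = (u¹,u²) and s_v = (v¹,v²) cross (intersect) if and only if (u¹ - v¹)(u² - v²) ≤ 0. For an element v, let α_v be the maximum length of a sequence (v = v₁, v₂, …, v_k) of elements all presented no later than v whose bottom coordinates are nondecreasing and top coordinates are nonincreasing, and let β_v be the maximum length of such a sequence with bottom coordinates nonincreasing and top coordinates nondecreasing. If every pairwise-crossing subfamily of base segments has size at most ω, then α_v + β_v ≤ ω + 1 for every v. -/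

import Mathlib

open Set

/-- For quasi-convex sets between two lines (modeled by the bottom/top
x-coordinates of their base segments, with distinct bottom coordinates), if every
pairwise-crossing subfamily has size at most ω, then for any element i and any
1-increasing-2-decreasing sequence A and 1-decreasing-2-increasing sequence B of
previously presented elements both starting at i, the lengths satisfy
|A| + |B| ≤ ω + 1; in particular α_i + β_i ≤ ω + 1. -/
theorem stmt0 {n ω : ℕ} (v : Fin n → ℝ × ℝ)
    (hinj : Function.Injective (fun i => (v i).1))
    (hclique : ∀ S : Finset (Fin n),
      (∀ i ∈ S, ∀ j ∈ S, i ≠ j → ((v i).1 - (v j).1) * ((v i).2 - (v j).2) ≤ 0) →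
      S.card ≤ ω)
    (i : Fin n) (A B : List (Fin n))
    (hAhead : A.head? = some i) (hBhead : B.head? = some i)
    (hAnd : A.Nodup) (hBnd : B.Nodup)
    (hAle : ∀ j ∈ A, j ≤ i) (hBle : ∀ j ∈ B, j ≤ i)
    (hA : A.Chain' (fun a b => (v a).1 ≤ (v b).1 ∧ (v b).2 ≤ (v a).2))
    (hB : B.Chain' (fun a b => (v b).1 ≤ (v a).1 ∧ (v a).2 ≤ (v b).2)) :
    A.length + B.length ≤ ω + 1 := by
  classical
  obtain ⟨A', rfl⟩ : ∃ A', A = i :: A' := by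
    cases A with
    | nil => simp at hAhead
    | cons a t => simp at hAhead; exact ⟨t, by rw [hAhead]⟩
  obtain ⟨B', rfl⟩ : ∃ B', B = i :: B' := by
    cases B with
    | nil => simp at hBhead
    | cons a t => simp at hBhead; exact ⟨t, by rw [hBhead]⟩
  set RA : Fin n → Fin n → Prop := fun a b => (v a).1 ≤ (v b).1 ∧ (v b).2 ≤ (v a).2 with hRA
  set RB : Fin n → Fin n → Prop := fun a b => (v b).1 ≤ (v a).1 ∧ (v a).2 ≤ (v b).2 with hRB
  have transA : IsTrans (Fin n) RA :=
    ⟨fun a b c hab hbc => ⟨le_trans hab.1 hbc.1, le_trans hbc.2 hab.2⟩⟩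
  have transB : IsTrans (Fin n) RB :=
    ⟨fun a b c hab hbc => ⟨le_trans hbc.1 hab.1, le_trans hab.2 hbc.2⟩⟩
  have hPA : (i :: A').Pairwise RA := (List.isChain_iff_pairwise (R := RA)).mp hA
  have hPB : (i :: B').Pairwise RB := (List.isChain_iff_pairwise (R := RB)).mp hB
  have hiA : ∀ x ∈ i :: A', (v i).1 ≤ (v x).1 ∧ (v x).2 ≤ (v i).2 := by
    intro x hx
    rcases List.mem_cons.mp hx with rfl | hx
    · exact ⟨le_refl _, le_refl _⟩
    · exact (List.pairwise_cons.mp hPA).1 x hx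
  have hiB : ∀ x ∈ i :: B', (v x).1 ≤ (v i).1 ∧ (v i).2 ≤ (v x).2 := by
    intro x hx
    rcases List.mem_cons.mp hx with rfl | hx
    · exact ⟨le_refl _, le_refl _⟩
    · exact (List.pairwise_cons.mp hPB).1 x hx
  set c : Fin n → Fin n → Prop := fun a b =>
    ((v a).1 - (v b).1) * ((v a).2 - (v b).2) ≤ 0 with hc
  have csymm : Symmetric c := by
    intro a b h
    simp only [hc] at h ⊢
    nlinarith [h]
  have hcA : ∀ x ∈ i :: A', ∀ y ∈ i :: A', x ≠ y → c x y :=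
    haveI : Std.Symm c := ⟨csymm⟩
    (hPA.imp (fun {a b} h => (by simp only [hc]; nlinarith [h.1, h.2] : c a b))).forall
  have hcB : ∀ x ∈ i :: B', ∀ y ∈ i :: B', x ≠ y → c x y :=
    haveI : Std.Symm c := ⟨csymm⟩
    (hPB.imp (fun {a b} h => (by simp only [hc]; nlinarith [h.1, h.2] : c a b))).forall
  have hcAB : ∀ x ∈ i :: A', ∀ y ∈ i :: B', c x y := by
    intro x hx y hy
    have h1 := hiA x hx
    have h2 := hiB y hy
    simp only [hc]
    nlinarith [h1.1, h1.2, h2.1, h2.2]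
  set S : Finset (Fin n) := (i :: A').toFinset ∪ (i :: B').toFinset with hS
  have hmem : ∀ x ∈ S, x ∈ i :: A' ∨ x ∈ i :: B' := by
    intro x hx
    rcases Finset.mem_union.mp hx with h | h
    · exact Or.inl (List.mem_toFinset.mp h)
    · exact Or.inr (List.mem_toFinset.mp h)
  have hScard : S.card ≤ ω := by
    apply hclique
    intro x hx y hy hxy
    rcases hmem x hx with hxA | hxB <;> rcases hmem y hy with hyA | hyB
    · exact hcA x hxA y hyA hxy
    · exact hcAB x hxA y hyB
    · exact csymm (hcAB y hyA x hxB)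
    · exact hcB x hxB y hyB hxy
  have hinter : (i :: A').toFinset ∩ (i :: B').toFinset = {i} := by
    apply Finset.ext
    intro j
    simp only [Finset.mem_inter, List.mem_toFinset, Finset.mem_singleton]
    constructor
    · rintro ⟨hjA, hjB⟩
      by_contra hne
      have h1 := (hiA j hjA).1
      have h2 := (hiB j hjB).1
      have : (v j).1 = (v i).1 := le_antisymm h2 h1
      exact hne (hinj this)
    · rintro rfl
      exact ⟨List.mem_cons_self, List.mem_cons_self⟩
  have hcardA : (i :: A').toFinset.card = (i :: A').length :=
    List.toFinset_card_of_nodup hAnd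
  have hcardB : (i :: B').toFinset.card = (i :: B').length :=
    List.toFinset_card_of_nodup hBnd
  have hkey := Finset.card_union_add_card_inter (i :: A').toFinset (i :: B').toFinset
  rw [← hS, hinter, hcardA, hcardB, Finset.card_singleton] at hkey
  omega
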